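/- Let σ, τ be polynomials with deg σ ≤ 2 and deg τ ≤ 1, and let η ∈ ℂ. If P is a polynomial of degree exactly n satisfying σ(z)P''(z) + τ(z)P'(z) + ηP(z) = 0, then n(n−1)σ''/2 + nτ' + η = 0. -/

import Mathlib

open Polynomial

/-- If a polynomial `P` of degree exactly `n` satisfies
`σP'' + τP' + ηP = 0` with `deg σ ≤ 2`, `deg τ ≤ 1`, then
`n(n−1)σ''/2 + nτ' + η = 0`. -/
theorem polynomial_eigenvalue_relation (σ τ : Polynomial ℂ)
    (hσ : σ.natDegree ≤ 2) (hτ : τ.natDegree ≤ 1) (η : ℂ)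
    (n : ℕ) (P : Polynomial ℂ) (hP0 : P ≠ 0) (hPdeg : P.natDegree = n)
    (heq : σ * derivative (derivative P) + τ * derivative P + Polynomial.C η * P = 0) :
    (n : ℂ) * ((n : ℂ) - 1) * (derivative (derivative σ)).coeff 0 / 2
      + (n : ℂ) * (derivative τ).coeff 0 + η = 0 := by
  have hc : P.coeff n ≠ 0 := by
    rw [← hPdeg]
    exact mt leadingCoeff_eq_zero.mp hP0
  have hσ'' : (derivative (derivative σ)).coeff 0 = 2 * σ.coeff 2 := by
    simp [coeff_derivative]; ring
  have hτ' : (derivative τ).coeff 0 = τ.coeff 1 := by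
    simp [coeff_derivative]
  have hz := congrArg (fun q => q.coeff n) heq
  simp only [coeff_add, coeff_zero, coeff_C_mul] at hz
  rw [hσ'', hτ']
  have hP' : (derivative P).natDegree ≤ n - 1 := by
    simpa [hPdeg] using natDegree_derivative_le P
  match n, hPdeg, hc, hz, hP' with
  | 0, hPdeg, hc, hz, hP' =>
    have h1 : derivative P = 0 := by
      rw [eq_C_of_natDegree_le_zero (le_of_eq hPdeg)]
      simp
    rw [h1] at hz
    simp only [derivative_zero, mul_zero, Polynomial.coeff_zero, zero_add] at hz
    have hη : η = 0 := by
      rcases mul_eq_zero.mp hz with h | h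
      · exact h
      · exact absurd h hc
    simp [hη]
  | 1, hPdeg, hc, hz, hP' =>
    have h0 : (derivative P).natDegree = 0 := by omega
    have h1 : derivative (derivative P) = 0 := by
      rw [eq_C_of_natDegree_le_zero (le_of_eq h0)]
      simp
    rw [h1, mul_zero] at hz
    have h2 : (τ * derivative P).coeff 1 = τ.coeff 1 * (derivative P).coeff 0 := by
      have := coeff_mul_add_eq_of_natDegree_le (f := τ) (g := derivative P) (df := 1) (dg := 0)
        hτ (by omega)
      simpa using this
    have h3 : (derivative P).coeff 0 = P.coeff 1 := by simp [coeff_derivative]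
    rw [h2, h3] at hz
    simp only [Polynomial.coeff_zero, zero_add] at hz
    have key : τ.coeff 1 + η = 0 := by
      have h : (τ.coeff 1 + η) * P.coeff 1 = 0 := by linear_combination hz
      rcases mul_eq_zero.mp h with h | h
      · exact h
      · exact absurd h hc
    push_cast
    linear_combination key
  | (m+2), hPdeg, hc, hz, hP' =>
    have hP'' : (derivative (derivative P)).natDegree ≤ m := by
      have := natDegree_derivative_le (derivative P)
      omega
    have h1 : (σ * derivative (derivative P)).coeff (m + 2)
        = σ.coeff 2 * (derivative (derivative P)).coeff m := by
      have := coeff_mul_add_eq_of_natDegree_le (f := σ) (g := derivative (derivative P))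
        (df := 2) (dg := m) hσ hP''
      rw [show 2 + m = m + 2 by ring] at this
      exact this
    have h2 : (τ * derivative P).coeff (m + 2)
        = τ.coeff 1 * (derivative P).coeff (m + 1) := by
      have := coeff_mul_add_eq_of_natDegree_le (f := τ) (g := derivative P)
        (df := 1) (dg := m + 1) hτ (by omega)
      rw [show 1 + (m + 1) = m + 2 by ring] at this
      exact this
    have h3 : (derivative P).coeff (m + 1) = P.coeff (m + 2) * (m + 2) := by
      rw [coeff_derivative]; push_cast; ring_nf
    have h4 : (derivative (derivative P)).coeff m
        = P.coeff (m + 2) * ((m + 1) * (m + 2)) := by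
      rw [coeff_derivative, coeff_derivative]; push_cast; ring_nf
    rw [h1, h2, h3, h4] at hz
    have key : σ.coeff 2 * ((m+1) * (m+2)) + τ.coeff 1 * ((m:ℂ)+2) + η = 0 := by
      have h : (σ.coeff 2 * ((m+1) * (m+2)) + τ.coeff 1 * ((m:ℂ)+2) + η) * P.coeff (m+2) = 0 := by
        linear_combination hz
      rcases mul_eq_zero.mp h with h | h
      · exact h
      · exact absurd h hc
    push_cast
    field_simp
    linear_combination key
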